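/- Let b ≥ 2, d ≥ 1, n ≥ 1 be integers with d dividing n + 1, and let ω ∈ ℂ be a primitive d-th root of unity. Then ∏_{i=1}^{n} (1 + ω^i + ω^{2i} + ⋯ + ω^{(b−1)i}) equals b^((n+1)/d − 1) if gcd(b, d) = 1, and equals 0 if gcd(b, d) ≠ 1. -/

import Mathlib

open Finset

/-- **Corollary (evaluation at t = 1, part c).**
If `d ∣ (n+1)` and `ω` is a primitive `d`th root of unity, then
`∏_{i=1}^{n} (1 + ω^i + ω^{2i} + ⋯ + ω^{(b-1)i})` equals `b^((n+1)/d - 1)` if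
`gcd(b,d) = 1` and `0` otherwise. -/
theorem stmt_14 (b d n : ℕ) (hb : 2 ≤ b) (hd : 1 ≤ d) (hn : 1 ≤ n) (hdn : d ∣ (n + 1))
    (ω : ℂ) (hω : IsPrimitiveRoot ω d) :
    (∏ i ∈ Finset.Icc 1 n, ∑ j ∈ Finset.range b, ω ^ (i * j)) =
      if Nat.gcd b d = 1 then (b : ℂ) ^ ((n + 1) / d - 1) else 0 := by
  set f : ℕ → ℂ := fun i => ∑ j ∈ Finset.range b, ω ^ (i * j) with hf
  have hωd : ω ^ d = 1 := hω.pow_eq_one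
  have hgeom : ∀ i : ℕ, f i * (ω ^ i - 1) = ω ^ (i * b) - 1 := by
    intro i
    have : f i = ∑ j ∈ Finset.range b, (ω ^ i) ^ j := by
      simp [hf, pow_mul]
    rw [this, geom_sum_mul, ← pow_mul]
  have hper : ∀ i : ℕ, f (i + d) = f i := by
    intro i
    apply Finset.sum_congr rfl
    intro j _
    have hdj : ω ^ (d * j) = 1 := by rw [pow_mul, hωd, one_pow]
    rw [add_mul, pow_add, hdj, mul_one]
  by_cases hcop : Nat.gcd b d = 1
  · -- coprime case
    rw [if_pos hcop]
    obtain ⟨m, hm⟩ := hdn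
    have hm1 : 1 ≤ m := by
      rcases Nat.eq_zero_or_pos m with h | h
      · subst h; simp at hm
      · exact h
    have hf0 : f 0 = (b : ℂ) := by simp [hf]
    have hperk : ∀ k i : ℕ, f (i + d * k) = f i := by
      intro k
      induction k with
      | zero => simp
      | succ k ih =>
        intro i
        have : i + d * (k + 1) = (i + d * k) + d := by ring
        rw [this, hper, ih]
    have hprim : IsPrimitiveRoot (ω ^ b) d := hω.pow_of_coprime b hcop
    obtain ⟨d', rfl⟩ : ∃ d', d = d' + 1 := ⟨d - 1, by omega⟩
    have hsq : ((-1 : ℂ) ^ d') * ((-1 : ℂ) ^ d') = 1 := by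
      rw [← pow_add]
      exact Even.neg_one_pow ⟨d', rfl⟩
    have hA : ∏ k ∈ Finset.range d', (ω ^ (k + 1) - 1) = (-1 : ℂ) ^ d' * ((d' : ℂ) + 1) := by
      have h := hω.prod_pow_sub_one_eq_order
      calc ∏ k ∈ Finset.range d', (ω ^ (k + 1) - 1)
          = ((-1 : ℂ) ^ d' * (-1 : ℂ) ^ d') * ∏ k ∈ Finset.range d', (ω ^ (k + 1) - 1) := by
            rw [hsq, one_mul]
        _ = (-1 : ℂ) ^ d' * ((-1 : ℂ) ^ d' * ∏ k ∈ Finset.range d', (ω ^ (k + 1) - 1)) := by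
            ring
        _ = (-1 : ℂ) ^ d' * ((d' : ℂ) + 1) := by rw [h]
    have hB : ∏ k ∈ Finset.range d', ((ω ^ b) ^ (k + 1) - 1)
        = (-1 : ℂ) ^ d' * ((d' : ℂ) + 1) := by
      have h := hprim.prod_pow_sub_one_eq_order
      calc ∏ k ∈ Finset.range d', ((ω ^ b) ^ (k + 1) - 1)
          = ((-1 : ℂ) ^ d' * (-1 : ℂ) ^ d') * ∏ k ∈ Finset.range d', ((ω ^ b) ^ (k + 1) - 1) := by
            rw [hsq, one_mul]
        _ = (-1 : ℂ) ^ d' * ((-1 : ℂ) ^ d' * ∏ k ∈ Finset.range d', ((ω ^ b) ^ (k + 1) - 1)) := by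
            ring
        _ = (-1 : ℂ) ^ d' * ((d' : ℂ) + 1) := by rw [h]
    have hd1 : ((d' : ℂ) + 1) ≠ 0 := by exact_mod_cast Nat.succ_ne_zero d'
    have hAne : (∏ k ∈ Finset.range d', (ω ^ (k + 1) - 1)) ≠ 0 := by
      rw [hA]
      exact mul_ne_zero (pow_ne_zero _ (by norm_num)) hd1
    have hQ : ∏ i ∈ Finset.Ico 1 (d' + 1), f i = 1 := by
      have hmul : (∏ i ∈ Finset.Ico 1 (d' + 1), f i) *
          ∏ k ∈ Finset.range d', (ω ^ (k + 1) - 1)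
          = ∏ k ∈ Finset.range d', ((ω ^ b) ^ (k + 1) - 1) := by
        rw [Finset.prod_Ico_eq_prod_range]
        simp only [Nat.add_sub_cancel]
        rw [← Finset.prod_mul_distrib]
        apply Finset.prod_congr rfl
        intro k _
        rw [add_comm 1 k, hgeom, ← pow_mul, mul_comm b (k + 1)]
      have : (∏ i ∈ Finset.Ico 1 (d' + 1), f i) *
          ∏ k ∈ Finset.range d', (ω ^ (k + 1) - 1)
          = 1 * ∏ k ∈ Finset.range d', (ω ^ (k + 1) - 1) := by
        rw [one_mul, hmul, hB, ← hA]
      exact mul_right_cancel₀ hAne this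
    have hP : ∏ i ∈ Finset.range (d' + 1), f i = (b : ℂ) := by
      rw [Finset.range_eq_Ico, Finset.prod_eq_prod_Ico_succ_bot (Nat.succ_pos d'), hf0, hQ,
        mul_one]
    have hPm : ∀ k : ℕ, ∏ i ∈ Finset.range ((d' + 1) * k), f i = (b : ℂ) ^ k := by
      intro k
      induction k with
      | zero => simp
      | succ k ih =>
        have h1 : (d' + 1) * (k + 1) = (d' + 1) * k + (d' + 1) := by ring
        rw [h1, Finset.prod_range_add, ih]
        have h2 : ∏ i ∈ Finset.range (d' + 1), f ((d' + 1) * k + i) = (b : ℂ) := by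
          rw [← hP]
          apply Finset.prod_congr rfl
          intro i _
          rw [add_comm, hperk]
        rw [h2, pow_succ]
    have hsplit : ∏ i ∈ Finset.range (n + 1), f i = (b : ℂ) * ∏ i ∈ Finset.Icc 1 n, f i := by
      rw [Finset.range_eq_Ico, Finset.prod_eq_prod_Ico_succ_bot (Nat.succ_pos n), hf0,
        Nat.succ_eq_add_one, Finset.Ico_add_one_right_eq_Icc]
    have hfull : ∏ i ∈ Finset.range (n + 1), f i = (b : ℂ) ^ m := by
      rw [hm]; exact hPm m
    have hbne : (b : ℂ) ≠ 0 := by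
      exact_mod_cast (by omega : b ≠ 0)
    have hmdiv : (n + 1) / (d' + 1) = m := by rw [hm]; exact Nat.mul_div_cancel_left m (by omega)
    rw [hmdiv]
    have : (b : ℂ) * ∏ i ∈ Finset.Icc 1 n, f i = (b : ℂ) * (b : ℂ) ^ (m - 1) := by
      rw [← hsplit, hfull, ← pow_succ']
      congr 1
      omega
    exact mul_left_cancel₀ hbne this
  · -- non-coprime case: some factor vanishes
    rw [if_neg hcop]
    set g := Nat.gcd b d with hg
    have hg2 : 2 ≤ g := by
      have := Nat.gcd_pos_of_pos_right b (show 0 < d by omega)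
      omega
    set p := g.minFac with hp
    have hpp : p.Prime := Nat.minFac_prime (by omega)
    have hpb : p ∣ b := (Nat.minFac_dvd g).trans (Nat.gcd_dvd_left b d)
    have hpd : p ∣ d := (Nat.minFac_dvd g).trans (Nat.gcd_dvd_right b d)
    set i := d / p with hi
    have hp2 : 2 ≤ p := hpp.two_le
    have hdp : i * p = d := Nat.div_mul_cancel hpd
    have hi1 : 1 ≤ i := (Nat.one_le_div_iff (by omega)).mpr (Nat.le_of_dvd (by omega) hpd)
    have hid : i < d := Nat.div_lt_self (by omega) (by omega)
    have himem : i ∈ Finset.Icc 1 n := by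
      have hd_le : d ≤ n + 1 := Nat.le_of_dvd (by omega) hdn
      have h1 : i ≤ d / 2 := Nat.div_le_div_left hp2 (by omega)
      have h2 : d / 2 ≤ (n + 1) / 2 := Nat.div_le_div_right hd_le
      exact Finset.mem_Icc.mpr ⟨hi1, by omega⟩
    apply Finset.prod_eq_zero himem
    have hωi : ω ^ i ≠ 1 := hω.pow_ne_one_of_pos_of_lt (by omega) hid
    have hnum : ω ^ (i * b) = 1 := by
      obtain ⟨c, hc⟩ := hpb
      have : i * b = d * c := by rw [hc, ← hdp]; ring
      rw [this, pow_mul, hωd, one_pow]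
    have h0 := hgeom i
    rw [hnum, sub_self] at h0
    rcases mul_eq_zero.mp h0 with h | h
    · exact h
    · exact absurd (sub_eq_zero.mp h) hωi
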